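/- Standard beam search is not monotonic in the beam width: there exists a finite search space with a start state, a goal state, unit action costs, and an admissible heuristic such that standard beam search with beam width 1 returns a solution of strictly lower cost than the solution returned by standard beam search with beam width 2. (In particular, the 11-node tree of Figure 2, where with width 1 the search proceeds A–B–D–G to a goal of cost 4, while with width 2 the children of C displace D from the level-2 beam and the cheap solution is lost.) -/

import Mathlib

open scoped Classical

noncomputable section

/-- A search space: start state, successor function giving (child, cost) pairs with
nonnegative costs, goal predicate, and a nonnegative heuristic. -/
structure SearchSpace (σ : Type) where
  start : σ
  succ : σ → List (σ × ℝ)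
  isGoal : σ → Bool
  h : σ → ℝ
  succ_nonneg : ∀ s, ∀ p ∈ succ s, 0 ≤ p.2
  h_nonneg : ∀ s, 0 ≤ h s

/-- A search node: the state it represents, the cost `g` of the path by which it was
reached, and its (pathmax-corrected) `f`-value. -/
structure Node (σ : Type) where
  state : σ
  g : ℝ
  f : ℝ

variable {σ : Type}

/-- `PathCost S s t c`: there is a path from `s` to `t` of total cost `c`. -/
inductive PathCost (S : SearchSpace σ) : σ → σ → ℝ → Prop
  | refl (s : σ) : PathCost S s s 0
  | step {s t u : σ} {c c' : ℝ} : (t, c) ∈ S.succ s → PathCost S t u c' →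
      PathCost S s u (c + c')

/-- The heuristic is admissible: `h s` is at most the cost of any path from `s` to a goal. -/
def SearchSpace.Admissible (S : SearchSpace σ) : Prop :=
  ∀ s t c, S.isGoal t = true → PathCost S s t c → S.h s ≤ c

/-- The space contains no infinite sequences of zero-cost operators. -/
def SearchSpace.NoInfiniteZeroCost (S : SearchSpace σ) : Prop :=
  ¬ ∃ seq : ℕ → σ, ∀ i, (seq (i + 1), (0 : ℝ)) ∈ S.succ (seq i)

/-- Ordering used to select candidates: minimum `f`, ties broken on lower `h`,
remaining ties broken by the fixed deterministic key `key`. -/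
def rank (S : SearchSpace σ) (key : Node σ → ℕ) (n : Node σ) : ℝ ×ₗ (ℝ ×ₗ ℕ) :=
  toLex (n.f, toLex (S.h n.state, key n))

/-- Remove-min from the candidates priority queue (deterministic). -/
def selectMin (S : SearchSpace σ) (key : Node σ → ℕ) (cands : List (Node σ)) :
    Option (Node σ) :=
  cands.argmin (rank S key)

/-- Expanding a node: children get `g` increased by the action cost, and their
`f`-value is pathmax-corrected to be at least the parent's `f`. -/
def children (S : SearchSpace σ) (n : Node σ) : List (Node σ) :=
  (S.succ n.state).map fun p =>
    { state := p.1, g := n.g + p.2, f := max (n.g + p.2 + S.h p.1) n.f }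

/-- Cost of the incumbent solution (`⊤` when there is none). -/
def incCost (inc : Option (Node σ)) : WithTop ℝ :=
  inc.elim ⊤ fun n => (n.f : WithTop ℝ)

/-- Record any goal children whose `f`-value beats the incumbent. -/
def updateIncumbent (inc : Option (Node σ)) (goals : List (Node σ)) : Option (Node σ) :=
  goals.foldl (fun inc c => if (c.f : WithTop ℝ) < incCost inc then some c else inc) inc

/-- State maintained while processing the slots of one level. -/
structure LevelState (σ : Type) where
  candidates : List (Node σ)
  nextBeam : List (Option (Node σ))
  incumbent : Option (Node σ)

/-- Expansion part of processing one slot: expand the node in the slot (if any),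
handle goal children via the incumbent, and add non-goal children to candidates. -/
def expandSlot (S : SearchSpace σ) (st : LevelState σ) (slot : Option (Node σ)) :
    LevelState σ :=
  match slot with
  | none => st
  | some n =>
    let kids := children S n
    { candidates := st.candidates ++ kids.filter (fun c => !(S.isGoal c.state)),
      nextBeam := st.nextBeam,
      incumbent := updateIncumbent st.incumbent (kids.filter (fun c => S.isGoal c.state)) }

/-- Process one slot `c` of the beam: expand, then (if candidates is nonempty)
remove the minimum-`f` candidate and place it in slot `c` of the next beam. -/
def processSlot (S : SearchSpace σ) (key : Node σ → ℕ) (st : LevelState σ)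
    (slot : Option (Node σ)) : LevelState σ :=
  let st1 := expandSlot S st slot
  match selectMin S key st1.candidates with
  | none => { st1 with nextBeam := st1.nextBeam ++ [none] }
  | some n => { st1 with candidates := st1.candidates.erase n,
                         nextBeam := st1.nextBeam ++ [some n] }

/-- One level of monobeam: process the slots in order, starting from an empty
candidates queue, producing the next beam and the updated incumbent. -/
def levelStep (S : SearchSpace σ) (key : Node σ → ℕ) (beam : List (Option (Node σ)))
    (inc : Option (Node σ)) : List (Option (Node σ)) × Option (Node σ) :=
  let st := beam.foldl (processSlot S key) ⟨[], [], inc⟩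
  (st.nextBeam, st.incumbent)

/-- The root node. -/
def startNode (S : SearchSpace σ) : Node σ := ⟨S.start, 0, S.h S.start⟩

/-- Initial beam of width `w`: the start node in slot 1, all other slots empty. -/
def initBeam (S : SearchSpace σ) (w : ℕ) : List (Option (Node σ)) :=
  some (startNode S) :: List.replicate (w - 1) none

/-- The (beam, incumbent) pair of monobeam with width `w` when the stopping
condition is tested for the `t`-th time (`t = 0` is the initial beam). -/
def run (S : SearchSpace σ) (key : Node σ → ℕ) (w : ℕ) :
    ℕ → List (Option (Node σ)) × Option (Node σ)
  | 0 => (initBeam S w, none)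
  | t + 1 => let p := run S key w t; levelStep S key p.1 p.2

/-- Stopping condition: no slot of the beam holds a node with `f`-value less than
the incumbent solution cost. -/
def stopCond (p : List (Option (Node σ)) × Option (Node σ)) : Prop :=
  ∀ n : Node σ, some n ∈ p.1 → incCost p.2 ≤ (n.f : WithTop ℝ)

/-- Monobeam with width `w` terminates after testing the stopping condition `t+… `
times: `t` is the first time the stopping condition holds. -/
def TerminatesAt (S : SearchSpace σ) (key : Node σ → ℕ) (w t : ℕ) : Prop :=
  stopCond (run S key w t) ∧ ∀ t' < t, ¬ stopCond (run S key w t')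

/-- Monobeam with width `w` terminates and returns the solution node `n`. -/
def Returns (S : SearchSpace σ) (key : Node σ → ℕ) (w : ℕ) (n : Node σ) : Prop :=
  ∃ t, TerminatesAt S key w t ∧ (run S key w t).2 = some n


/-- Children for standard beam search: `f = g + h` (no pathmax). -/
def childrenStd (S : SearchSpace σ) (n : Node σ) : List (Node σ) :=
  (S.succ n.state).map fun p =>
    { state := p.1, g := n.g + p.2, f := n.g + p.2 + S.h p.1 }

/-- Retain the (at most) `w` nodes with lowest `f`-values, ties broken in favor of
lower `h`-values (remaining ties broken by the fixed deterministic key inside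
`rank`). -/
def takeBest (S : SearchSpace σ) (key : Node σ → ℕ) (w : ℕ) (l : List (Node σ)) :
    List (Node σ) :=
  (l.mergeSort (fun a b => decide (rank S key a ≤ rank S key b))).take w

/-- The beam of standard beam search with width `w` at level `t`. -/
def beamIter (S : SearchSpace σ) (key : Node σ → ℕ) (w : ℕ) : ℕ → List (Node σ)
  | 0 => [startNode S]
  | t + 1 => takeBest S key w ((beamIter S key w t).flatMap (childrenStd S))

/-- All nodes generated while expanding level `t` of standard beam search. -/
def genAt (S : SearchSpace σ) (key : Node σ → ℕ) (w t : ℕ) : List (Node σ) :=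
  (beamIter S key w t).flatMap (childrenStd S)

/-- A goal node is generated while expanding level `t`. -/
def FoundAt (S : SearchSpace σ) (key : Node σ → ℕ) (w t : ℕ) : Prop :=
  ∃ n ∈ genAt S key w t, S.isGoal n.state = true

/-- Standard beam search with width `w` returns the solution node `n`: at the first
level at which a goal node is generated, `n` is a generated goal node of lowest cost. -/
def BeamReturns (S : SearchSpace σ) (key : Node σ → ℕ) (w : ℕ) (n : Node σ) : Prop :=
  ∃ t, FoundAt S key w t ∧ (∀ t' < t, ¬ FoundAt S key w t') ∧
    n ∈ genAt S key w t ∧ S.isGoal n.state = true ∧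
    ∀ m ∈ genAt S key w t, S.isGoal m.state = true → n.g ≤ m.g

/-! ### Auxiliary construction for the counterexample -/

def exSucc : Fin 10 → List (Fin 10 × ℝ)
  | 0 => [(1,1),(2,1)]
  | 1 => [(3,1),(4,1)]
  | 2 => [(5,1),(6,1)]
  | 3 => [(8,1)]
  | 4 => []
  | 5 => [(7,1)]
  | 6 => []
  | 7 => [(9,1)]
  | 8 => []
  | 9 => []

def exH : Fin 10 → ℝ
  | 0 => 0 | 1 => 1 | 2 => 2 | 3 => 1 | 4 => 5
  | 5 => 0 | 6 => 0 | 7 => 1 | 8 => 0 | 9 => 0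

/-- A lower bound on the distance to the nearest goal. -/
def exD : Fin 10 → ℝ
  | 0 => 3 | 1 => 2 | 2 => 3 | 3 => 1 | 4 => 5
  | 5 => 2 | 6 => 5 | 7 => 1 | 8 => 0 | 9 => 0

def exS : SearchSpace (Fin 10) where
  start := 0
  succ := exSucc
  isGoal := fun s => decide (s = 8 ∨ s = 9)
  h := exH
  succ_nonneg := by
    intro s p hp
    fin_cases s <;> simp [exSucc] at hp <;>
      [ (rcases hp with ⟨_, rfl⟩ | ⟨_, rfl⟩);
        (rcases hp with ⟨_, rfl⟩ | ⟨_, rfl⟩);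
        (rcases hp with ⟨_, rfl⟩ | ⟨_, rfl⟩);
        (obtain ⟨_, rfl⟩ := hp);
        (obtain ⟨_, rfl⟩ := hp);
        (obtain ⟨_, rfl⟩ := hp) ] <;>
      norm_num
  h_nonneg := by intro s; fin_cases s <;> norm_num [exH]

def exKey : Node (Fin 10) → ℕ := fun n => n.state.val

lemma exEdge {s t : Fin 10} {c : ℝ} (hmem : (t, c) ∈ exSucc s) :
    c = 1 ∧ exD s ≤ 1 + exD t := by
  fin_cases s <;> simp [exSucc] at hmem <;>
    [ (rcases hmem with ⟨rfl, rfl⟩ | ⟨rfl, rfl⟩);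
      (rcases hmem with ⟨rfl, rfl⟩ | ⟨rfl, rfl⟩);
      (rcases hmem with ⟨rfl, rfl⟩ | ⟨rfl, rfl⟩);
      (obtain ⟨rfl, rfl⟩ := hmem);
      (obtain ⟨rfl, rfl⟩ := hmem);
      (obtain ⟨rfl, rfl⟩ := hmem) ] <;>
    norm_num [exD]

lemma exD_le {s t : Fin 10} {c : ℝ} (hp : PathCost exS s t c)
    (ht : exS.isGoal t = true) : exD s ≤ c := by
  induction hp with
  | refl s =>
      have : s = 8 ∨ s = 9 := by simpa [exS] using ht
      rcases this with rfl | rfl <;> norm_num [exD]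
  | @step s t u c c' hmem _ ih =>
      obtain ⟨rfl, hle⟩ := exEdge (show (t, c) ∈ exSucc s from hmem)
      have := ih ht
      linarith

lemma exAdm : exS.Admissible := by
  intro s t c ht hp
  have h1 : exS.h s ≤ exD s := by
    fin_cases s <;> norm_num [exS, exH, exD]
  exact h1.trans (exD_le hp ht)

lemma exUnit : ∀ s, ∀ p ∈ exS.succ s, p.2 = (1 : ℝ) := by
  intro s p hp
  exact (exEdge (show (p.1, p.2) ∈ exSucc s from hp)).1

/- Computation lemmas for the runs. -/

lemma genAt10 : genAt exS exKey 1 0 = [⟨1,1,2⟩, ⟨2,1,3⟩] := by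
  simp [genAt, beamIter, childrenStd, startNode, exS, exSucc, exH]
  norm_num


lemma beamIter_succ (S : SearchSpace σ) (key : Node σ → ℕ) (w t : ℕ) :
    beamIter S key w (t + 1) = takeBest S key w (genAt S key w t) := rfl

lemma rank_le_true {a b : Node (Fin 10)} (h : rank exS exKey a ≤ rank exS exKey b) :
    decide (rank exS exKey a ≤ rank exS exKey b) = true := decide_eq_true h

lemma rank_le_false {a b : Node (Fin 10)} (h : ¬ rank exS exKey a ≤ rank exS exKey b) :
    decide (rank exS exKey a ≤ rank exS exKey b) = false := decide_eq_false h

lemma beam11 : beamIter exS exKey 1 1 = [⟨1,1,2⟩] := by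
  rw [beamIter_succ, genAt10]
  have h1 : decide (rank exS exKey ⟨1,1,2⟩ ≤ rank exS exKey ⟨2,1,3⟩) = true := by
    apply rank_le_true
    simp only [rank, Prod.Lex.le_iff]
    norm_num [exS, exH, exKey]
  simp [takeBest, List.mergeSort, List.MergeSort.Internal.splitInTwo, List.merge, h1]

lemma genAt11 : genAt exS exKey 1 1 = [⟨3,2,3⟩, ⟨4,2,7⟩] := by
  rw [genAt, beam11]
  simp [childrenStd, exS, exSucc, exH]
  norm_num

lemma beam12 : beamIter exS exKey 1 2 = [⟨3,2,3⟩] := by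
  rw [beamIter_succ, genAt11]
  have h1 : decide (rank exS exKey ⟨3,2,3⟩ ≤ rank exS exKey ⟨4,2,7⟩) = true := by
    apply rank_le_true
    simp only [rank, Prod.Lex.le_iff]
    norm_num [exS, exH, exKey]
  simp [takeBest, List.mergeSort, List.MergeSort.Internal.splitInTwo, List.merge, h1]

lemma genAt12 : genAt exS exKey 1 2 = [⟨8,3,3⟩] := by
  rw [genAt, beam12]
  simp [childrenStd, exS, exSucc, exH]
  norm_num

lemma genAt20 : genAt exS exKey 2 0 = [⟨1,1,2⟩, ⟨2,1,3⟩] := by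
  simp [genAt, beamIter, childrenStd, startNode, exS, exSucc, exH]
  norm_num

lemma beam21 : beamIter exS exKey 2 1 = [⟨1,1,2⟩, ⟨2,1,3⟩] := by
  rw [beamIter_succ, genAt20]
  have h1 : decide (rank exS exKey ⟨1,1,2⟩ ≤ rank exS exKey ⟨2,1,3⟩) = true := by
    apply rank_le_true
    simp only [rank, Prod.Lex.le_iff]
    norm_num [exS, exH, exKey]
  simp [takeBest, List.mergeSort, List.MergeSort.Internal.splitInTwo, List.merge, h1]

lemma genAt21 : genAt exS exKey 2 1 = [⟨3,2,3⟩, ⟨4,2,7⟩, ⟨5,2,2⟩, ⟨6,2,2⟩] := by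
  rw [genAt, beam21]
  simp [childrenStd, exS, exSucc, exH]
  norm_num

lemma beam22 : beamIter exS exKey 2 2 = [⟨5,2,2⟩, ⟨6,2,2⟩] := by
  rw [beamIter_succ, genAt21]
  have h1 : decide (rank exS exKey ⟨3,2,3⟩ ≤ rank exS exKey ⟨4,2,7⟩) = true := by
    apply rank_le_true
    simp only [rank, Prod.Lex.le_iff]
    norm_num [exS, exH, exKey]
  have h2 : decide (rank exS exKey ⟨5,2,2⟩ ≤ rank exS exKey ⟨6,2,2⟩) = true := by
    apply rank_le_true
    simp only [rank, Prod.Lex.le_iff]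
    norm_num [exS, exH, exKey]
  have h3 : decide (rank exS exKey ⟨3,2,3⟩ ≤ rank exS exKey ⟨5,2,2⟩) = false := by
    apply rank_le_false
    simp only [rank, Prod.Lex.le_iff]
    norm_num [exS, exH, exKey]
  have h4 : decide (rank exS exKey ⟨3,2,3⟩ ≤ rank exS exKey ⟨6,2,2⟩) = false := by
    apply rank_le_false
    simp only [rank, Prod.Lex.le_iff]
    norm_num [exS, exH, exKey]
  simp [takeBest, List.mergeSort, List.MergeSort.Internal.splitInTwo, List.merge, h1, h2, h3, h4]

lemma genAt22 : genAt exS exKey 2 2 = [⟨7,3,4⟩] := by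
  rw [genAt, beam22]
  simp [childrenStd, exS, exSucc, exH]
  norm_num

lemma beam23 : beamIter exS exKey 2 3 = [⟨7,3,4⟩] := by
  rw [beamIter_succ, genAt22]
  simp [takeBest, List.mergeSort]

lemma genAt23 : genAt exS exKey 2 3 = [⟨9,4,4⟩] := by
  rw [genAt, beam23]
  simp [childrenStd, exS, exSucc, exH]
  norm_num
/-- standard beam search is not monotonic in the beam width.  There
is a finite search space with unit action costs and an admissible heuristic (e.g. the
11-node tree of Figure 2) on which beam search with width 1 returns a solution of
strictly lower cost than the solution returned by beam search with width 2. -/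

theorem beam_search_not_monotonic :
    ∃ (σ : Type) (_ : Finite σ) (S : SearchSpace σ) (key : Node σ → ℕ)
      (n₁ n₂ : Node σ),
      (∀ s, ∀ p ∈ S.succ s, p.2 = (1 : ℝ)) ∧
      S.Admissible ∧
      BeamReturns S key 1 n₁ ∧
      BeamReturns S key 2 n₂ ∧
      n₁.g < n₂.g := by
  refine ⟨Fin 10, inferInstance, exS, exKey, ⟨8,3,3⟩, ⟨9,4,4⟩, exUnit, exAdm, ?_, ?_, ?_⟩
  · refine ⟨2, ⟨⟨8,3,3⟩, ?_, ?_⟩, ?_, ?_, ?_, ?_⟩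
    · rw [genAt12]; simp
    · rfl
    · intro t' ht'
      interval_cases t' <;>
        [ (rw [FoundAt, genAt10]); (rw [FoundAt, genAt11]) ] <;>
        simp [exS]
    · rw [genAt12]; simp
    · rfl
    · intro m hm hgm
      rw [genAt12] at hm
      simp at hm
      subst hm
      norm_num
  · refine ⟨3, ⟨⟨9,4,4⟩, ?_, ?_⟩, ?_, ?_, ?_, ?_⟩
    · rw [genAt23]; simp
    · rfl
    · intro t' ht'
      interval_cases t' <;>
        [ (rw [FoundAt, genAt20]); (rw [FoundAt, genAt21]); (rw [FoundAt, genAt22]) ] <;>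
        simp [exS]
    · rw [genAt23]; simp
    · rfl
    · intro m hm hgm
      rw [genAt23] at hm
      simp at hm
      subst hm
      norm_num
  · norm_num

end
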